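/- Let $l$ be a positive odd integer, $m$ a positive integer such that $p = 2m^2+l$ is prime, and suppose $m \leq n < p - m$ and $p > 2n$. Then $p$ divides $\prod_{k=1}^n (2k^2+l)$ to exactly the first power (i.e., $p \| \prod_{k=1}^n (2k^2+l)$), and hence $\prod_{k=1}^n (2k^2+l)$ is not a perfect square. -/

import Mathlib

theorem stmt_18 (l m p n : ℕ) (hl : 0 < l) (hlodd : Odd l) (hm : 0 < m)
    (hpeq : p = 2 * m ^ 2 + l) (hp : p.Prime) (hmn : m ≤ n) (hnp : n < p - m)
    (hpn : 2 * n < p) :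
    (p ∣ ∏ k ∈ Finset.Icc 1 n, (2 * k ^ 2 + l)
      ∧ ¬ p ^ 2 ∣ ∏ k ∈ Finset.Icc 1 n, (2 * k ^ 2 + l))
    ∧ ¬ IsSquare (∏ k ∈ Finset.Icc 1 n, (2 * k ^ 2 + l)) := by
  have hm2 : 1 ≤ m ^ 2 := Nat.one_le_pow _ _ hm
  have hmn2 : m ≤ m ^ 2 := by nlinarith
  have hmp : m < p := by omega
  have hnm : n + m < p := by omega
  have hp2 : 2 < p := by omega
  have hmem : m ∈ Finset.Icc 1 n := Finset.mem_Icc.mpr ⟨hm, hmn⟩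
  have hfm : 2 * m ^ 2 + l = p := hpeq.symm
  -- p does not divide any other factor
  have hkey : ∀ k ∈ (Finset.Icc 1 n).erase m, ¬ p ∣ 2 * k ^ 2 + l := by
    intro k hk hdvd
    obtain ⟨hkm, hkI⟩ := Finset.mem_erase.mp hk
    obtain ⟨hk1, hkn⟩ := Finset.mem_Icc.mp hkI
    have hpz : Prime (p : ℤ) := Nat.prime_iff_prime_int.mp hp
    have h1 : (p : ℤ) ∣ 2 * (k : ℤ) ^ 2 + l := by exact_mod_cast hdvd
    have h2 : (p : ℤ) ∣ 2 * (m : ℤ) ^ 2 + l := by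
      have : ((2 * m ^ 2 + l : ℕ) : ℤ) = 2 * (m:ℤ)^2 + l := by push_cast; ring
      rw [← this, ← hpeq]
    have h3 : (p : ℤ) ∣ 2 * (((k : ℤ) - m) * ((k : ℤ) + m)) := by
      have := dvd_sub h1 h2
      have heq : 2 * (k : ℤ) ^ 2 + l - (2 * (m : ℤ) ^ 2 + l)
          = 2 * (((k : ℤ) - m) * ((k : ℤ) + m)) := by ring
      rwa [heq] at this
    rcases hpz.dvd_mul.mp h3 with h4 | h4
    · have : (p : ℤ) ≤ 2 := Int.le_of_dvd (by norm_num) h4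
      omega
    rcases hpz.dvd_mul.mp h4 with h5 | h5
    · have h6 : (k : ℤ) - m = 0 := by
        apply Int.eq_zero_of_abs_lt_dvd h5
        have hkp : k < p := by omega
        rw [abs_sub_lt_iff]
        constructor <;> push_cast <;> omega
      have : k = m := by omega
      exact hkm this
    · have h6 : (k : ℤ) + m = 0 := by
        apply Int.eq_zero_of_abs_lt_dvd h5
        have : (0:ℤ) ≤ (k:ℤ) + m := by positivity
        rw [abs_of_nonneg this]
        push_cast; omega
      omega
  have hprod : (∏ k ∈ Finset.Icc 1 n, (2 * k ^ 2 + l))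
      = p * ∏ k ∈ (Finset.Icc 1 n).erase m, (2 * k ^ 2 + l) := by
    rw [← Finset.mul_prod_erase _ _ hmem, hfm]
  have hnd : ¬ p ∣ ∏ k ∈ (Finset.Icc 1 n).erase m, (2 * k ^ 2 + l) := by
    intro h
    obtain ⟨a, ha, hdvd⟩ := (hp.prime.dvd_finset_prod_iff _).mp h
    exact hkey a ha hdvd
  have hdvd1 : p ∣ ∏ k ∈ Finset.Icc 1 n, (2 * k ^ 2 + l) := by
    rw [hprod]; exact Dvd.intro _ rfl
  have hnd2 : ¬ p ^ 2 ∣ ∏ k ∈ Finset.Icc 1 n, (2 * k ^ 2 + l) := by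
    intro h
    rw [hprod, pow_two] at h
    exact hnd ((mul_dvd_mul_iff_left (by omega : p ≠ 0)).mp h)
  refine ⟨⟨hdvd1, hnd2⟩, ?_⟩
  rintro ⟨a, ha⟩
  apply hnd2
  rw [ha]
  have : p ∣ a := hp.dvd_of_dvd_pow (n := 2) (by rw [pow_two, ← ha]; exact hdvd1)
  rw [pow_two]
  exact mul_dvd_mul this this
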